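/- (X_i-theory consistency) If Γ is a set of sentences that is maximal AX^{X,A,∀}_e-consistent with respect to L and contains both ¬X_i φ and A_i φ, then Γ/X_i ∪ {¬φ} is AX^{X,A,∀}_e-consistent, where Γ/X_i = {ψ : X_i ψ ∈ Γ}. -/
import Mathlib


namespace AwarenessPaper

inductive Fm : Type
  | prop : ℕ → Fm
  | var  : ℕ → Fm
  | neg  : Fm → Fm
  | and  : Fm → Fm → Fm
  | k    : ℕ → Fm → Fm
  | a    : ℕ → Fm → Fm
  | x    : ℕ → Fm → Fm
  | all  : ℕ → Fm → Fm

namespace Fm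

def props : Fm → Set ℕ
  | .prop p => {p}
  | .var _ => ∅
  | .neg φ => props φ
  | .and φ ψ => props φ ∪ props ψ
  | .k _ φ => props φ
  | .a _ φ => props φ
  | .x _ φ => props φ
  | .all _ φ => props φ

def free : Fm → Set ℕ
  | .prop _ => ∅
  | .var v => {v}
  | .neg φ => free φ
  | .and φ ψ => free φ ∪ free ψ
  | .k _ φ => free φ
  | .a _ φ => free φ
  | .x _ φ => free φ
  | .all v φ => free φ \ {v}

def qcount : Fm → ℕ
  | .prop _ => 0
  | .var _ => 0
  | .neg φ => qcount φ
  | .and φ ψ => max (qcount φ) (qcount ψ)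
  | .k _ φ => qcount φ
  | .a _ φ => qcount φ
  | .x _ φ => qcount φ
  | .all _ φ => qcount φ + 1

def substV (v : ℕ) (ψ : Fm) : Fm → Fm
  | .prop p => .prop p
  | .var u => if u = v then ψ else .var u
  | .neg φ => .neg (substV v ψ φ)
  | .and φ₁ φ₂ => .and (substV v ψ φ₁) (substV v ψ φ₂)
  | .k i φ => .k i (substV v ψ φ)
  | .a i φ => .a i (substV v ψ φ)
  | .x i φ => .x i (substV v ψ φ)
  | .all u φ => if u = v then .all u φ else .all u (substV v ψ φ)

def substP (q : ℕ) (ψ : Fm) : Fm → Fm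
  | .prop p => if p = q then ψ else .prop p
  | .var u => .var u
  | .neg φ => .neg (substP q ψ φ)
  | .and φ₁ φ₂ => .and (substP q ψ φ₁) (substP q ψ φ₂)
  | .k i φ => .k i (substP q ψ φ)
  | .a i φ => .a i (substP q ψ φ)
  | .x i φ => .x i (substP q ψ φ)
  | .all u φ => .all u (substP q ψ φ)

/-- Primitive propositions of a formula, as a list. -/
def propList : Fm → List ℕ
  | .prop p => [p]
  | .var _ => []
  | .neg φ => propList φ
  | .and φ ψ => propList φ ++ propList ψ
  | .k _ φ => propList φ
  | .a _ φ => propList φ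
  | .x _ φ => propList φ
  | .all _ φ => propList φ

def or (φ ψ : Fm) : Fm := .neg (.and (.neg φ) (.neg ψ))
def imp (φ ψ : Fm) : Fm := Fm.or (.neg φ) ψ
def iff (φ ψ : Fm) : Fm := .and (imp φ ψ) (imp ψ φ)
def top : Fm := Fm.or (.prop 0) (.neg (.prop 0))
def bot : Fm := .neg top

/-- Boolean evaluation of the propositional skeleton of a formula, treating
everything other than `¬` and `∧` as an atom.  `∀ v, beval v φ = true` says
exactly that `φ` is a substitution instance of a propositional tautology. -/
def beval (v : Fm → Bool) : Fm → Bool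
  | .neg φ => ! beval v φ
  | .and φ ψ => beval v φ && beval v ψ
  | φ => v φ

end Fm

/-- Conjunction of a list of formulas (the empty conjunction is `⊤`). -/
def conj : List Fm → Fm
  | [] => Fm.top
  | φ :: l => Fm.and φ (conj l)

/-- The theorems of the axiom system `AX^{X,A,∀}_e`:
Prop, AGPP, XA, FA*_X, K_X, A0_X, 1_∀, K_∀, N_∀, Barcan*_X, MP, Gen_X, Gen_∀. -/
inductive Thm : Fm → Prop
  | taut (φ : Fm) (h : ∀ v : Fm → Bool, Fm.beval v φ = true) : Thm φ
  | agppAx (i : ℕ) (φ : Fm) :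
      Thm (Fm.iff (.a i φ) (conj ((Fm.propList φ).map fun p => Fm.a i (.prop p))))
  | xaAx (i : ℕ) (φ : Fm) : Thm (Fm.imp (.a i φ) (.x i (.a i φ)))
  | faAx (i x : ℕ) :
      Thm (Fm.imp (.all x (.neg (.a i (.var x)))) (.x i (.all x (.neg (.a i (.var x))))))
  | kAx (i : ℕ) (φ ψ : Fm) :
      Thm (Fm.imp (.and (.x i φ) (.x i (Fm.imp φ ψ))) (.x i ψ))
  | a0Ax (i : ℕ) (φ : Fm) : Thm (Fm.imp (.x i φ) (.a i φ))
  | oneAll (x : ℕ) (φ ψ : Fm) (h1 : Fm.qcount ψ = 0) (h2 : Fm.free ψ = ∅) :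
      Thm (Fm.imp (.all x φ) (Fm.substV x ψ φ))
  | kAll (x : ℕ) (φ ψ : Fm) :
      Thm (Fm.imp (.all x (Fm.imp φ ψ)) (Fm.imp (.all x φ) (.all x ψ)))
  | nAll (x : ℕ) (φ : Fm) (h : x ∉ Fm.free φ) : Thm (Fm.imp φ (.all x φ))
  | barcanAx (i x : ℕ) (φ : Fm) :
      Thm (Fm.imp (.and (.a i (.all x φ)) (.all x (Fm.imp (.a i (.var x)) (.x i φ))))
                  (.x i (Fm.imp (.all x (.a i (.var x))) (.all x φ))))
  | mp (φ ψ : Fm) : Thm (Fm.imp φ ψ) → Thm φ → Thm ψ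
  | genX (i : ℕ) (φ : Fm) : Thm φ → Thm (Fm.imp (.a i φ) (.x i φ))
  | genAll (x q : ℕ) (φ : Fm) : Thm φ → Thm (.all x (Fm.substP q (.var x) φ))

/-- `Γ ⊢ φ`: derivable from finitely many members of `Γ` and theorems of
`AX^{X,A,∀}_e` by modus ponens. -/
def Derivable (Γ : Set Fm) (φ : Fm) : Prop :=
  ∃ l : List Fm, (∀ ψ ∈ l, ψ ∈ Γ) ∧ Thm (Fm.imp (conj l) φ)

def Consistent (Γ : Set Fm) : Prop := ¬ Derivable Γ Fm.bot

/-- `Γ` is acceptable with respect to `L`: whenever `φ` is a formula over `L`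
with (at most) the free variable `x` and `Γ ⊢ φ[x/q]` for all but finitely many
primitive propositions `q ∈ L`, then `Γ ⊢ ∀x φ`. -/
def Acceptable (Γ : Set Fm) (L : Set ℕ) : Prop :=
  ∀ (x : ℕ) (φ : Fm), Fm.props φ ⊆ L → Fm.free φ ⊆ {x} →
    {q ∈ L | ¬ Derivable Γ (Fm.substV x (.prop q) φ)}.Finite →
    Derivable Γ (.all x φ)

/-- `Γ` is a maximal consistent set of sentences with respect to `L`. -/
def MaxConsistent (Γ : Set Fm) (L : Set ℕ) : Prop :=
  (∀ φ ∈ Γ, Fm.props φ ⊆ L ∧ Fm.free φ = ∅) ∧ Consistent Γ ∧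
    ∀ φ : Fm, Fm.props φ ⊆ L → Fm.free φ = ∅ → Consistent (insert φ Γ) → φ ∈ Γ


/-! ### Auxiliary lemmas -/

section Aux

namespace Fm

@[simp] lemma beval_neg (v : Fm → Bool) (φ : Fm) : beval v (.neg φ) = !beval v φ := rfl
@[simp] lemma beval_and (v : Fm → Bool) (φ ψ : Fm) :
    beval v (.and φ ψ) = (beval v φ && beval v ψ) := rfl
@[simp] lemma beval_imp (v : Fm → Bool) (φ ψ : Fm) :
    beval v (imp φ ψ) = (!beval v φ || beval v ψ) := by
  show (!(!(!(beval v φ)) && !(beval v ψ))) = _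
  cases beval v φ <;> cases beval v ψ <;> rfl
@[simp] lemma beval_top (v : Fm → Bool) : beval v top = true := by
  show (!(!(beval v (.prop 0)) && !(!(beval v (.prop 0))))) = true
  cases beval v (.prop 0) <;> rfl
@[simp] lemma beval_bot (v : Fm → Bool) : beval v bot = false := by
  show (!(beval v top)) = false
  simp

end Fm

@[simp] lemma beval_conj (v : Fm → Bool) : ∀ l : List Fm,
    Fm.beval v (conj l) = l.all (Fm.beval v)
  | [] => by simp [conj]
  | φ :: l => by simp [conj, beval_conj v l]

/-- Nested-implication "currying" of a list of premises. -/
def curry (l : List Fm) (φ : Fm) : Fm := l.foldr Fm.imp φ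

@[simp] lemma beval_curry (v : Fm → Bool) (φ : Fm) : ∀ l : List Fm,
    Fm.beval v (curry l φ) = (!l.all (Fm.beval v) || Fm.beval v φ)
  | [] => by simp [curry]
  | ψ :: l => by
    show Fm.beval v (Fm.imp ψ (curry l φ)) = _
    simp [beval_curry v φ l, Bool.or_assoc]

lemma propList_imp (φ ψ : Fm) :
    (Fm.imp φ ψ).propList = φ.propList ++ ψ.propList := by
  simp [Fm.imp, Fm.or, Fm.propList]

lemma propList_curry (φ : Fm) : ∀ l : List Fm,
    (curry l φ).propList = (l.flatMap Fm.propList) ++ φ.propList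
  | [] => by simp [curry]
  | ψ :: l => by
    show (Fm.imp ψ (curry l φ)).propList = _
    simp [propList_imp, propList_curry φ l]

/-- Theorems are derivable. -/
lemma derivable_thm {Γ : Set Fm} {φ : Fm} (h : Thm φ) : Derivable Γ φ := by
  refine ⟨[], by simp, ?_⟩
  exact Thm.mp _ _ (Thm.taut _ (by intro v; simp [conj])) h

/-- Members are derivable. -/
lemma derivable_mem {Γ : Set Fm} {φ : Fm} (h : φ ∈ Γ) : Derivable Γ φ := by
  refine ⟨[φ], by simpa using h, ?_⟩
  exact Thm.taut _ (by intro v; simp [conj])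

/-- Modus ponens for derivability. -/
lemma derivable_mp {Γ : Set Fm} {φ ψ : Fm}
    (h1 : Derivable Γ (Fm.imp φ ψ)) (h2 : Derivable Γ φ) : Derivable Γ ψ := by
  obtain ⟨l1, hl1, ht1⟩ := h1
  obtain ⟨l2, hl2, ht2⟩ := h2
  refine ⟨l1 ++ l2, ?_, ?_⟩
  · intro χ hχ; rcases List.mem_append.1 hχ with h | h
    · exact hl1 χ h
    · exact hl2 χ h
  · have taut : Thm (Fm.imp (Fm.imp (conj l1) (Fm.imp φ ψ))
        (Fm.imp (Fm.imp (conj l2) φ) (Fm.imp (conj (l1 ++ l2)) ψ))) := by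
      apply Thm.taut
      intro v
      simp only [Fm.beval_imp, beval_conj, List.all_append]
      cases l1.all (Fm.beval v) <;> cases l2.all (Fm.beval v) <;>
        cases Fm.beval v φ <;> cases Fm.beval v ψ <;> rfl
    exact Thm.mp _ _ (Thm.mp _ _ taut ht1) ht2

/-- Applying a proved implication to a derivable formula. -/
lemma derivable_imp {Γ : Set Fm} {φ ψ : Fm}
    (h : Thm (Fm.imp φ ψ)) (h2 : Derivable Γ φ) : Derivable Γ ψ :=
  derivable_mp (derivable_thm h) h2

/-- Conjunction introduction for derivability. -/
lemma derivable_and {Γ : Set Fm} {φ ψ : Fm}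
    (h1 : Derivable Γ φ) (h2 : Derivable Γ ψ) : Derivable Γ (Fm.and φ ψ) := by
  refine derivable_mp (derivable_imp ?_ h1) h2
  apply Thm.taut; intro v
  simp only [Fm.beval_imp, Fm.beval_and]
  cases Fm.beval v φ <;> cases Fm.beval v ψ <;> rfl

/-- Combining two derivable conjunctions. -/
lemma derivable_conj_append {Γ : Set Fm} {l1 l2 : List Fm}
    (h1 : Derivable Γ (conj l1)) (h2 : Derivable Γ (conj l2)) :
    Derivable Γ (conj (l1 ++ l2)) := by
  refine derivable_mp (derivable_imp ?_ h1) h2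
  apply Thm.taut; intro v
  simp only [Fm.beval_imp, beval_conj, List.all_append]
  cases l1.all (Fm.beval v) <;> cases l2.all (Fm.beval v) <;> rfl

/-- Forward direction of AGPP. -/
lemma derivable_agpp_fwd {Γ : Set Fm} {i : ℕ} {ψ : Fm}
    (h : Derivable Γ (.a i ψ)) :
    Derivable Γ (conj ((ψ.propList).map fun p => Fm.a i (.prop p))) := by
  have hag := Thm.agppAx i ψ
  refine derivable_mp (derivable_imp ?_ (derivable_thm hag)) h
  apply Thm.taut; intro v
  simp only [Fm.iff, Fm.beval_imp, Fm.beval_and]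
  cases Fm.beval v (.a i ψ) <;>
    cases Fm.beval v (conj ((ψ.propList).map fun p => Fm.a i (.prop p))) <;> rfl

/-- Backward direction of AGPP. -/
lemma derivable_agpp_bwd {Γ : Set Fm} {i : ℕ} {ψ : Fm}
    (h : Derivable Γ (conj ((ψ.propList).map fun p => Fm.a i (.prop p)))) :
    Derivable Γ (.a i ψ) := by
  have hag := Thm.agppAx i ψ
  refine derivable_mp (derivable_imp ?_ (derivable_thm hag)) h
  apply Thm.taut; intro v
  simp only [Fm.iff, Fm.beval_imp, Fm.beval_and]
  cases Fm.beval v (.a i ψ) <;>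
    cases Fm.beval v (conj ((ψ.propList).map fun p => Fm.a i (.prop p))) <;> rfl

/-- Awareness of the primitive propositions of all members of a list whose
`X_i`-versions are in `Γ`. -/
lemma derivable_aprops {Γ : Set Fm} {i : ℕ} : ∀ l : List Fm,
    (∀ ψ ∈ l, Fm.x i ψ ∈ Γ) →
    Derivable Γ (conj ((l.flatMap Fm.propList).map fun p => Fm.a i (.prop p)))
  | [], _ => by
    simp only [List.flatMap_nil, List.map_nil]
    exact derivable_thm (Thm.taut _ (by intro v; simp [conj]))
  | ψ :: l, h => by
    have hx : Derivable Γ (.a i ψ) :=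
      derivable_imp (Thm.a0Ax i ψ) (derivable_mem (h ψ (by simp)))
    have h1 := derivable_agpp_fwd hx
    have h2 := derivable_aprops l (fun χ hχ => h χ (by simp [hχ]))
    simpa [List.flatMap_cons, List.map_append] using derivable_conj_append h1 h2

/-- Unrolling `K_X` along a curried implication. -/
lemma derivable_unroll {Γ : Set Fm} {i : ℕ} {φ : Fm} : ∀ l : List Fm,
    (∀ ψ ∈ l, Fm.x i ψ ∈ Γ) → Derivable Γ (.x i (curry l φ)) →
    Derivable Γ (.x i φ)
  | [], _, h => h
  | ψ :: l, hmem, h => by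
    have hx : Derivable Γ (.x i ψ) := derivable_mem (hmem ψ (by simp))
    have hk := Thm.kAx i ψ (curry l φ)
    have : Derivable Γ (.x i (curry l φ)) :=
      derivable_imp hk (derivable_and hx h)
    exact derivable_unroll l (fun χ hχ => hmem χ (by simp [hχ])) this

end Aux

/-- `X_i`-theory consistency: if `Γ` is maximal consistent w.r.t. `L` and contains
`¬X_i φ` and `A_i φ`, then `Γ/X_i ∪ {¬φ}` is consistent. -/
theorem stmt18 (Γ : Set Fm) (L : Set ℕ) (i : ℕ) (φ : Fm)
    (hmax : MaxConsistent Γ L) (h1 : Fm.neg (.x i φ) ∈ Γ) (h2 : Fm.a i φ ∈ Γ) :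
    Consistent ({ψ : Fm | Fm.x i ψ ∈ Γ} ∪ {Fm.neg φ}) := by
  classical
  intro hcon
  obtain ⟨l, hl, ht⟩ := hcon
  -- remove `¬φ` from the premise list
  set l' : List Fm := l.filter (fun ψ => ψ ≠ Fm.neg φ) with hl'def
  have hmem' : ∀ ψ ∈ l', Fm.x i ψ ∈ Γ := by
    intro ψ hψ
    rw [hl'def, List.mem_filter] at hψ
    obtain ⟨hψl, hne⟩ := hψ
    rcases hl ψ hψl with h | h
    · exact h
    · simp only [Set.mem_singleton_iff] at h
      simp [h] at hne
  -- `⊢ conj l' ⇒ φ`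
  have hthm' : Thm (Fm.imp (conj l') φ) := by
    refine Thm.mp _ _ (Thm.taut
      (Fm.imp (Fm.imp (conj l) Fm.bot) (Fm.imp (conj l') φ)) ?_) ht
    intro v
    simp only [Fm.beval_imp, beval_conj, Fm.beval_bot]
    by_cases hall : l'.all (Fm.beval v) = true
    · by_cases hφ : Fm.beval v φ = true
      · simp [hall, hφ]
      · have : l.all (Fm.beval v) = true := by
          rw [List.all_eq_true]
          intro ψ hψ
          by_cases he : ψ = Fm.neg φ
          · subst he; simp [Bool.eq_false_iff.2 hφ]
          · exact (List.all_eq_true.1 hall) ψ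
              (by rw [hl'def, List.mem_filter]; exact ⟨hψ, by simp [he]⟩)
        simp [this]
    · simp [Bool.eq_false_iff.2 hall]
  -- `⊢ curry l' φ`
  have hcurry : Thm (curry l' φ) := by
    refine Thm.mp _ _ (Thm.taut
      (Fm.imp (Fm.imp (conj l') φ) (curry l' φ)) ?_) hthm'
    intro v
    simp only [Fm.beval_imp, beval_conj, beval_curry]
    cases l'.all (Fm.beval v) <;> cases Fm.beval v φ <;> rfl
  -- `Γ ⊢ A_i (curry l' φ)`
  have haw : Derivable Γ (.a i (curry l' φ)) := by
    apply derivable_agpp_bwd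
    rw [propList_curry, List.map_append]
    exact derivable_conj_append (derivable_aprops l' hmem')
      (derivable_agpp_fwd (derivable_mem h2))
  -- `Γ ⊢ X_i (curry l' φ)`, hence `Γ ⊢ X_i φ`
  have hxcurry : Derivable Γ (.x i (curry l' φ)) :=
    derivable_imp (Thm.genX i _ hcurry) haw
  have hxφ : Derivable Γ (.x i φ) := derivable_unroll l' hmem' hxcurry
  -- contradiction with `¬X_i φ ∈ Γ`
  have hbot : Derivable Γ Fm.bot := by
    refine derivable_mp (derivable_imp ?_ (derivable_mem h1)) hxφ
    apply Thm.taut; intro v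
    simp only [Fm.beval_imp, Fm.beval_neg, Fm.beval_bot]
    cases Fm.beval v (.x i φ) <;> rfl
  exact hmax.2.1 hbot

end AwarenessPaper
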